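/- For every natural number n ≥ 1, ∑_{j=1}^{n} j·H_{j-1}·H_{n+1−j} = C(n+2,2)·[(H_{n+1}² − H_{n+1}^{(2)}) − 2(H_{n+1} − 1)], where H_k is the k-th harmonic number with H_0 = 0 and H_k^{(2)} is the k-th harmonic number of order 2. -/

import Mathlib

open Finset

noncomputable def H (n : ℕ) : ℝ := ∑ i ∈ Finset.Icc 1 n, (1:ℝ)/i
noncomputable def H2 (n : ℕ) : ℝ := ∑ i ∈ Finset.Icc 1 n, (1:ℝ)/(i:ℝ)^2

lemma H_succ (n : ℕ) : H (n+1) = H n + 1/((n:ℝ)+1) := by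
  unfold H
  rw [Finset.sum_Icc_succ_top (by omega)]
  push_cast; ring

lemma H2_succ (n : ℕ) : H2 (n+1) = H2 n + 1/((n:ℝ)+1)^2 := by
  unfold H2
  rw [Finset.sum_Icc_succ_top (by omega)]
  push_cast; ring

lemma Hzero : H 0 = 0 := by simp [H]
lemma H2zero : H2 0 = 0 := by simp [H2]
lemma Hone : H 1 = 1 := by simp [H]
lemma H2one : H2 1 = 1 := by simp [H2]

lemma shift (f : ℕ → ℝ) (a b : ℕ) :
    ∑ m ∈ Icc a b, f (m+1) = ∑ m ∈ Icc (a+1) (b+1), f m := by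
  apply Finset.sum_nbij' (fun m => m+1) (fun m => m-1) <;> intros <;>
    simp_all [Finset.mem_Icc] <;> omega

lemma reflect (f : ℕ → ℝ) (N : ℕ) :
    ∑ m ∈ Icc 1 N, f (N+1-m) = ∑ m ∈ Icc 1 N, f m := by
  apply Finset.sum_nbij' (fun m => N+1-m) (fun m => N+1-m) <;> intros <;>
    simp_all [Finset.mem_Icc] <;> omega

lemma L0 (n : ℕ) : ∑ j ∈ Icc 1 n, H (j-1) = n * H n - n := by
  induction n with
  | zero => simp [Hzero]
  | succ n ih =>
    rw [Finset.sum_Icc_succ_top (by omega), ih]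
    simp only [Nat.add_sub_cancel, H_succ]
    push_cast
    field_simp
    ring

lemma Lfrac (N : ℕ) :
    ∑ m ∈ Icc 1 N, (1:ℝ)/(m * ((N+1-m : ℕ):ℝ)) = 2 * H N / ((N:ℝ)+1) := by
  have key : ∑ m ∈ Icc 1 N, (1:ℝ)/(m * ((N+1-m : ℕ):ℝ))
      = ∑ m ∈ Icc 1 N, (1/((N:ℝ)+1)) * (1/(m:ℝ) + 1/((N+1-m : ℕ):ℝ)) := by
    apply Finset.sum_congr rfl
    intro m hm
    simp only [Finset.mem_Icc] at hm
    have h1 : (1:ℝ) ≤ (m:ℝ) := by exact_mod_cast hm.1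
    have h2 : ((N+1-m : ℕ):ℝ) = (N:ℝ)+1-(m:ℝ) := by
      push_cast [Nat.cast_sub (by omega : m ≤ N+1)]; ring
    rw [h2]
    have hm2 : (m:ℝ) ≤ (N:ℝ) := by exact_mod_cast hm.2
    have : (m:ℝ) ≠ 0 := by linarith
    have : (N:ℝ)+1-(m:ℝ) ≠ 0 := by linarith
    field_simp
    ring
  rw [key, ← Finset.mul_sum, Finset.sum_add_distrib]
  have hr : ∑ m ∈ Icc 1 N, (1:ℝ)/((N+1-m : ℕ):ℝ) = H N := by
    rw [reflect (fun m => (1:ℝ)/(m:ℝ)) N]; rfl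
  rw [hr]
  have : ∑ m ∈ Icc 1 N, (1:ℝ)/(m:ℝ) = H N := rfl
  rw [this]
  ring

lemma L1 (N : ℕ) :
    ∑ m ∈ Icc 1 N, (1/(m:ℝ)) * H (N-m) = H N ^ 2 - H2 N := by
  induction N with
  | zero => simp [Hzero, H2zero]
  | succ N ih =>
    rw [Finset.sum_Icc_succ_top (by omega)]
    simp only [Nat.sub_self, Hzero, mul_zero, add_zero]
    have step : ∑ m ∈ Icc 1 N, (1/(m:ℝ)) * H (N+1-m)
        = ∑ m ∈ Icc 1 N, ((1/(m:ℝ)) * H (N-m) + (1:ℝ)/(m * ((N+1-m : ℕ):ℝ))) := by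
      apply Finset.sum_congr rfl
      intro m hm
      simp only [Finset.mem_Icc] at hm
      have he : N+1-m = (N-m)+1 := by omega
      rw [he, H_succ]
      have h1 : ((N+1-m : ℕ):ℝ) = (N:ℝ)+1-(m:ℝ) := by
        push_cast [Nat.cast_sub (by omega : m ≤ N+1)]; ring
      have h2 : ((N-m : ℕ):ℝ) = (N:ℝ)-(m:ℝ) := by
        push_cast [Nat.cast_sub (by omega : m ≤ N)]; ring
      have h3 : ((N-m+1 : ℕ):ℝ) = (N:ℝ)-(m:ℝ)+1 := by
        push_cast [Nat.cast_sub (by omega : m ≤ N)]; ring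
      rw [h2, h3]
      have hm1 : (1:ℝ) ≤ (m:ℝ) := by exact_mod_cast hm.1
      have hm2 : (m:ℝ) ≤ (N:ℝ) := by exact_mod_cast hm.2
      have hne1 : (m:ℝ) ≠ 0 := by linarith
      have hne2 : (N:ℝ)-(m:ℝ)+1 ≠ 0 := by linarith
      have hne3 : (N:ℝ)+1-(m:ℝ) ≠ 0 := by linarith
      field_simp
    rw [step, Finset.sum_add_distrib, ih, Lfrac, H_succ, H2_succ]
    have : (N:ℝ)+1 ≠ 0 := by positivity
    field_simp
    ring

lemma E (n : ℕ) :
    ∑ j ∈ Icc 1 n, H (j-1) * (1/((n+2-j:ℕ):ℝ)) = H (n+1)^2 - H2 (n+1) - H n := by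
  have key : ∑ j ∈ Icc 1 n, H (j-1) * (1/((n+2-j:ℕ):ℝ))
      = ∑ m ∈ Icc 2 (n+1), (1/(m:ℝ)) * H (n+1-m) := by
    apply Finset.sum_nbij' (i := fun j => n+2-j) (j := fun m => n+2-m)
    · intro a ha; simp only [Finset.mem_Icc] at *; omega
    · intro a ha; simp only [Finset.mem_Icc] at *; omega
    · intro a ha; simp only [Finset.mem_Icc] at *; omega
    · intro a ha; simp only [Finset.mem_Icc] at *; omega
    · intro a ha
      simp only [Finset.mem_Icc] at ha
      rw [show n+1-(n+2-a) = a-1 from by omega]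
      ring
  have l1 := L1 (n+1)
  rw [show Icc 1 (n+1) = insert 1 (Icc 2 (n+1)) from by
        ext x; simp only [Finset.mem_insert, Finset.mem_Icc]; omega,
      Finset.sum_insert (by simp)] at l1
  norm_num at l1
  simp only [one_div] at key l1 ⊢
  rw [key]
  linarith [l1]

theorem stmt9 (n : ℕ) (hn : 1 ≤ n) :
    ∑ j ∈ Icc 1 n, (j:ℝ) * H (j-1) * H (n+1-j)
      = (((n:ℝ)+1)*((n:ℝ)+2)/2)*(((H (n+1))^2 - H2 (n+1)) - 2*(H (n+1) - 1)) := by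
  induction n, hn using Nat.le_induction with
  | base =>
    have h2 : H (1+1) = 3/2 := by rw [H_succ, Hone]; norm_num
    have h2' : H2 (1+1) = 5/4 := by rw [H2_succ, H2one]; norm_num
    simp only [Finset.Icc_self, Finset.sum_singleton, Nat.sub_self, Hzero]
    rw [h2, h2']
    norm_num
  | succ n hn ih =>
    rw [Finset.sum_Icc_succ_top (by omega),
        show n+1-1 = n from by omega, show n+1+1-(n+1) = 1 from by omega, Hone]
    have split : ∑ j ∈ Icc 1 n, (j:ℝ) * H (j-1) * H (n+1+1-j)
        = ∑ j ∈ Icc 1 n, ((j:ℝ) * H (j-1) * H (n+1-j)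
            + (((n:ℝ)+2) * (H (j-1) * (1/((n+2-j:ℕ):ℝ))) - H (j-1))) := by
      apply Finset.sum_congr rfl
      intro j hj
      simp only [Finset.mem_Icc] at hj
      rw [show n+1+1-j = (n+1-j)+1 from by omega, H_succ]
      have c1 : ((n+1-j:ℕ):ℝ) = (n:ℝ)+1-(j:ℝ) := by
        push_cast [Nat.cast_sub (by omega : j ≤ n+1)]; ring
      have c2 : ((n+2-j:ℕ):ℝ) = (n:ℝ)+2-(j:ℝ) := by
        push_cast [Nat.cast_sub (by omega : j ≤ n+2)]; ring
      have c3 : ((n+1-j+1:ℕ):ℝ) = (n:ℝ)+2-(j:ℝ) := by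
        push_cast [Nat.cast_sub (by omega : j ≤ n+1)]; ring
      rw [c1]
      try rw [c2]
      try rw [c3]
      have hj1 : (1:ℝ) ≤ (j:ℝ) := by exact_mod_cast hj.1
      have hj2 : (j:ℝ) ≤ (n:ℝ) := by exact_mod_cast hj.2
      have hne : (n:ℝ)+1-(j:ℝ)+1 ≠ 0 := by linarith
      have hne2 : (n:ℝ)+2-(j:ℝ) ≠ 0 := by linarith
      field_simp
      ring
    rw [split, Finset.sum_add_distrib, Finset.sum_sub_distrib, ← Finset.mul_sum,
        E n, L0 n, ih]
    have hHn : H n = H (n+1) - 1/((n:ℝ)+1) := by rw [H_succ]; ring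
    rw [show n+1+1 = (n+1)+1 from rfl, H_succ (n+1), H2_succ (n+1), hHn]
    have h1 : (n:ℝ)+1 ≠ 0 := by positivity
    have h2 : (n:ℝ)+1+1 ≠ 0 := by positivity
    push_cast
    field_simp
    ring
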